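/- arXiv:1004.1198 — 3 statements merged into one kernel-verified Lean document; each statement's English description precedes it below -/
import Mathlib

section
/- (Theorem 1, Cross-addition Constraint) Let q be a prime power and define f : GF(q) → Mat(q×q, GF(2)) by f(a)(i,j) = 1 if i − j = a and 0 otherwise, with rows and columns indexed by GF(q). Let W = [w_{i,j}] be a μ × η matrix over GF(q) and let H be the μq × ηq binary block matrix whose (i,j) block is f(w_{i,j}), i.e., H((i,x),(j,y)) = f(w_{i,j})(x,y) for block indices 1 ≤ i ≤ μ, 1 ≤ j ≤ η and x, y ∈ GF(q). Then the Tanner graph of H contains no cycle of length four — equivalently, there do not exist two distinct rows r₁ ≠ r₂ and two distinct columns c₁ ≠ c₂ of H with H(r₁,c₁) = H(r₁,c₂) = H(r₂,c₁) = H(r₂,c₂) = 1 — if and only if w_{i₁,j₁} + w_{i₂,j₂} ≠ w_{i₁,j₂} + w_{i₂,j₁} for all 1 ≤ i₁, i₂ ≤ μ and 1 ≤ j₁, j₂ ≤ η with i₁ ≠ i₂ and j₁ ≠ j₂. -/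
/-- Given a `μ × η` matrix `W` over a finite field `F` of order `q`, `blockMatrix W` is
the `μq × ηq` binary matrix obtained by replacing each entry `w_{i,j}` of `W` by the
`q × q` permutation matrix `f(w_{i,j})`, where `f(a)(x,y) = 1` iff `x - y = a`.
Its rows are indexed by `Fin μ × F` and its columns by `Fin η × F`. -/
def blockMatrix {F : Type*} [Field F] [DecidableEq F] {μ η : ℕ} (W : Fin μ → Fin η → F) :
    Matrix (Fin μ × F) (Fin η × F) (ZMod 2) :=
  Matrix.of fun r c => if r.2 - c.2 = W r.1 c.1 then 1 else 0

/-- Theorem 1 (Cross-addition Constraint): the Tanner graph of the block matrix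
`H = f(W)` contains no cycle of length four (i.e. there are no two distinct rows and two
distinct columns whose four intersection entries all equal `1`) if and only if
`w_{i₁,j₁} + w_{i₂,j₂} ≠ w_{i₁,j₂} + w_{i₂,j₁}` for all `i₁ ≠ i₂` and `j₁ ≠ j₂`. -/
theorem no_four_cycle_iff_cross_addition
    {F : Type*} [Field F] [Fintype F] [DecidableEq F] {μ η : ℕ}
    (W : Fin μ → Fin η → F) :
    (¬ ∃ (r₁ r₂ : Fin μ × F) (c₁ c₂ : Fin η × F), r₁ ≠ r₂ ∧ c₁ ≠ c₂ ∧
        blockMatrix W r₁ c₁ = 1 ∧ blockMatrix W r₁ c₂ = 1 ∧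
        blockMatrix W r₂ c₁ = 1 ∧ blockMatrix W r₂ c₂ = 1) ↔
    (∀ (i₁ i₂ : Fin μ) (j₁ j₂ : Fin η), i₁ ≠ i₂ → j₁ ≠ j₂ →
        W i₁ j₁ + W i₂ j₂ ≠ W i₁ j₂ + W i₂ j₁) := by
  have key : ∀ (r : Fin μ × F) (c : Fin η × F),
      blockMatrix W r c = 1 ↔ r.2 - c.2 = W r.1 c.1 := by
    intro r c
    simp only [blockMatrix, Matrix.of_apply]
    split <;> simp_all
  constructor
  · intro h i₁ i₂ j₁ j₂ hi hj heq
    apply h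
    refine ⟨(i₁, W i₁ j₁), (i₂, W i₂ j₁), (j₁, 0), (j₂, W i₁ j₁ - W i₁ j₂),
      ?_, ?_, ?_, ?_, ?_, ?_⟩
    · simp [Prod.ext_iff, hi]
    · simp [Prod.ext_iff, hj]
    all_goals rw [key]; simp only
    · ring
    · ring
    · ring
    · linear_combination -heq
  · rintro h ⟨r₁, r₂, c₁, c₂, hr, hc, h11, h12, h21, h22⟩
    rw [key] at h11 h12 h21 h22
    by_cases hi : r₁.1 = r₂.1
    · apply hr
      have : r₁.2 = r₂.2 := by
        linear_combination h11 - h21 + congrFun (congrArg W hi) c₁.1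
      exact Prod.ext hi this
    · by_cases hj : c₁.1 = c₂.1
      · apply hc
        have : c₁.2 = c₂.2 := by
          linear_combination h12 - h11 - congrArg (W r₁.1) hj
        exact Prod.ext hj this
      · exact h r₁.1 r₂.1 c₁.1 c₂.1 hi hj (by linear_combination h12 + h21 - h11 - h22)
end

section
/- Let q be a prime power and let GF(q) be the finite field with q elements. Let H be the q² × q² matrix over GF(2), with rows indexed by pairs (i,x) ∈ GF(q) × GF(q) and columns indexed by pairs (j,y) ∈ GF(q) × GF(q), defined by H((i,x),(j,y)) = 1 if x − y = i·j and H((i,x),(j,y)) = 0 otherwise. Then the Tanner graph of H contains no cycle of length four: there do not exist two distinct rows r₁ ≠ r₂ and two distinct columns c₁ ≠ c₂ of H with H(r₁,c₁) = H(r₁,c₂) = H(r₂,c₁) = H(r₂,c₂) = 1. -/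
/-- The `q² × q²` binary matrix `H`, with rows indexed by pairs `(i,x) ∈ GF(q) × GF(q)`
and columns by pairs `(j,y) ∈ GF(q) × GF(q)`, whose `((i,x),(j,y))` entry is `1` if
`x - y = i·j` and `0` otherwise (the `q × q` array of permutation matrices whose
`(i,j)` block is `f(i·j)`). -/
def fullBlockMatrix (F : Type*) [Field F] [DecidableEq F] :
    Matrix (F × F) (F × F) (ZMod 2) :=
  Matrix.of fun r c => if r.2 - c.2 = r.1 * c.1 then 1 else 0

/-- The Tanner graph of the matrix `H((i,x),(j,y)) = 1 ↔ x - y = i·j` over `GF(q)`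
contains no cycle of length four: there are no two distinct rows and two distinct
columns whose four intersection entries all equal `1`. -/
theorem fullBlockMatrix_no_four_cycle
    {F : Type*} [Field F] [Fintype F] [DecidableEq F] :
    ¬ ∃ (r₁ r₂ : F × F) (c₁ c₂ : F × F), r₁ ≠ r₂ ∧ c₁ ≠ c₂ ∧
        fullBlockMatrix F r₁ c₁ = 1 ∧ fullBlockMatrix F r₁ c₂ = 1 ∧
        fullBlockMatrix F r₂ c₁ = 1 ∧ fullBlockMatrix F r₂ c₂ = 1 := by
  rintro ⟨⟨i₁, x₁⟩, ⟨i₂, x₂⟩, ⟨j₁, y₁⟩, ⟨j₂, y₂⟩, hr, hc, h11, h12, h21, h22⟩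
  simp only [fullBlockMatrix, Matrix.of_apply] at h11 h12 h21 h22
  have e11 : x₁ - y₁ = i₁ * j₁ := by by_contra h; rw [if_neg h] at h11; exact one_ne_zero h11.symm
  have e12 : x₁ - y₂ = i₁ * j₂ := by by_contra h; rw [if_neg h] at h12; exact one_ne_zero h12.symm
  have e21 : x₂ - y₁ = i₂ * j₁ := by by_contra h; rw [if_neg h] at h21; exact one_ne_zero h21.symm
  have e22 : x₂ - y₂ = i₂ * j₂ := by by_contra h; rw [if_neg h] at h22; exact one_ne_zero h22.symm
  have key : (i₁ - i₂) * (j₁ - j₂) = 0 := by linear_combination e12 + e21 - e11 - e22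
  rcases mul_eq_zero.mp key with h | h
  · have hi : i₁ = i₂ := sub_eq_zero.mp h
    exact hr (Prod.ext hi (by linear_combination e11 - e21 + j₁ * hi))
  · have hj : j₁ = j₂ := sub_eq_zero.mp h
    exact hc (Prod.ext hj (by linear_combination e12 - e11 - i₁ * hj))
end

section
/- (Cross-multiplication Constraint) Let q be a prime power and let GF(q)* denote the multiplicative group of nonzero elements of GF(q). Define g : GF(q)* → Mat((q−1)×(q−1), GF(2)), with rows and columns indexed by the elements of GF(q)*, by g(a)(i,j) = 1 if i·j⁻¹ = a and g(a)(i,j) = 0 otherwise. Let W = [w_{i,j}] be a μ × η matrix with entries in GF(q)* and let H be the μ(q−1) × η(q−1) binary block matrix whose (i,j) block is g(w_{i,j}). Then the Tanner graph of H contains no cycle of length four — there do not exist two distinct rows r₁ ≠ r₂ and two distinct columns c₁ ≠ c₂ of H with H(r₁,c₁) = H(r₁,c₂) = H(r₂,c₁) = H(r₂,c₂) = 1 — if and only if w_{i₁,j₁} · w_{i₂,j₂} ≠ w_{i₁,j₂} · w_{i₂,j₁} for all i₁ ≠ i₂ and j₁ ≠ j₂. -/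
/-- Given a `μ × η` matrix `W` with entries in the multiplicative group `GF(q)*` (the
units of the finite field `F`), `mulBlockMatrix W` is the `μ(q−1) × η(q−1)` binary
matrix obtained by replacing each entry `w_{i,j}` by the `(q−1) × (q−1)` permutation
matrix `g(w_{i,j})`, where `g(a)(x,y) = 1` iff `x·y⁻¹ = a`, rows and columns of each
block being indexed by `GF(q)*`. -/
def mulBlockMatrix {F : Type*} [Field F] [DecidableEq F] {μ η : ℕ}
    (W : Fin μ → Fin η → Fˣ) :
    Matrix (Fin μ × Fˣ) (Fin η × Fˣ) (ZMod 2) :=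
  Matrix.of fun r c => if r.2 * c.2⁻¹ = W r.1 c.1 then 1 else 0

/-- Cross-multiplication Constraint: the Tanner graph of the block matrix `H = g(W)`
contains no cycle of length four (i.e. there are no two distinct rows and two distinct
columns whose four intersection entries all equal `1`) if and only if
`w_{i₁,j₁} · w_{i₂,j₂} ≠ w_{i₁,j₂} · w_{i₂,j₁}` for all `i₁ ≠ i₂` and `j₁ ≠ j₂`. -/
theorem no_four_cycle_iff_cross_multiplication
    {F : Type*} [Field F] [Fintype F] [DecidableEq F] {μ η : ℕ}
    (W : Fin μ → Fin η → Fˣ) :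
    (¬ ∃ (r₁ r₂ : Fin μ × Fˣ) (c₁ c₂ : Fin η × Fˣ), r₁ ≠ r₂ ∧ c₁ ≠ c₂ ∧
        mulBlockMatrix W r₁ c₁ = 1 ∧ mulBlockMatrix W r₁ c₂ = 1 ∧
        mulBlockMatrix W r₂ c₁ = 1 ∧ mulBlockMatrix W r₂ c₂ = 1) ↔
    (∀ (i₁ i₂ : Fin μ) (j₁ j₂ : Fin η), i₁ ≠ i₂ → j₁ ≠ j₂ →
        W i₁ j₁ * W i₂ j₂ ≠ W i₁ j₂ * W i₂ j₁) := by
  have hone : ∀ (r : Fin μ × Fˣ) (c : Fin η × Fˣ),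
      mulBlockMatrix W r c = 1 ↔ r.2 * c.2⁻¹ = W r.1 c.1 := by
    intro r c
    simp only [mulBlockMatrix, Matrix.of_apply]
    split <;> simp_all
  constructor
  · intro h i₁ i₂ j₁ j₂ hi hj heq
    apply h
    refine ⟨(i₁, W i₁ j₁), (i₂, W i₂ j₁), (j₁, 1), (j₂, (W i₁ j₂)⁻¹ * W i₁ j₁),
      ?_, ?_, ?_, ?_, ?_, ?_⟩
    · simp [Prod.ext_iff, hi]
    · simp [Prod.ext_iff, hj]
    · rw [hone]; group
    · rw [hone]; simp
    · rw [hone]; group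
    · rw [hone]
      simp only [mul_inv_rev, inv_inv]
      have : W i₂ j₁ * ((W i₁ j₁)⁻¹ * W i₁ j₂) = W i₂ j₂ := by
        have := heq.symm
        rw [mul_left_comm, mul_comm (W i₂ j₁), this, inv_mul_cancel_left]
      simpa using this
  · rintro h ⟨⟨i₁, x₁⟩, ⟨i₂, x₂⟩, ⟨j₁, y₁⟩, ⟨j₂, y₂⟩, hr, hc, h11, h12, h21, h22⟩
    rw [hone] at h11 h12 h21 h22
    simp only at h11 h12 h21 h22
    by_cases hi : i₁ = i₂
    · subst hi
      have hx : x₁ = x₂ := by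
        have := h11.trans h21.symm
        exact mul_right_cancel this
      exact hr (by simp [hx])
    by_cases hj : j₁ = j₂
    · subst hj
      have hy : y₁ = y₂ := by
        have := h11.trans h12.symm
        have := mul_left_cancel this
        exact inv_injective this
      exact hc (by simp [hy])
    exact h i₁ i₂ j₁ j₂ hi hj (by rw [← h11, ← h22, ← h12, ← h21, mul_mul_mul_comm, mul_mul_mul_comm x₁ y₂⁻¹, mul_comm y₂⁻¹ y₁⁻¹])
end
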